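/- Let F be a field and let H_v, H_u ∈ F^{N×L_Z} have full row rank N, and let F_v, F_u ∈ F^{N×L}. Let α = dim(rowspan(H_v) ∩ rowspan(H_u)). Suppose there exist matrices P_v, P_u ∈ F^{α×N} with P_v H_v = P_u H_u, rank(P_v) = rank(P_u) = α, and P_v F_v = P_u F_u. Then for ALL matrices Q_v, Q_u (with N columns, over F) satisfying Q_v H_v = Q_u H_u, one has Q_v F_v = Q_u F_u. -/

import Mathlib

open Matrix

/-- The row space of a matrix: the span of its rows in `Fin LZ → F`. -/
noncomputable def rowSpan {F : Type} [Field F] {N LZ : ℕ}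
    (H : Matrix (Fin N) (Fin LZ) F) : Submodule F (Fin LZ → F) :=
  Submodule.span F (Set.range H)

/-- Linear correctness condition for a (qualified) pair of nodes. -/
def CorrectPair (F : Type) [Field F] (L N LZ : ℕ)
    (Fv Fu : Matrix (Fin N) (Fin L) F) (Hv Hu : Matrix (Fin N) (Fin LZ) F) : Prop :=
  ∀ (k : ℕ) (Pv Pu : Matrix (Fin k) (Fin N) F),
    Pv * Hv = Pu * Hu →
    Pv.rank = Module.finrank F ↥(rowSpan Hv ⊓ rowSpan Hu) →
    Pu.rank = Module.finrank F ↥(rowSpan Hv ⊓ rowSpan Hu) →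
    (Pv * Fv - Pu * Fu).rank = L

/-- Linear security condition for an (unqualified) pair of nodes. -/
def SecurePair (F : Type) [Field F] (L N LZ : ℕ)
    (Fv Fu : Matrix (Fin N) (Fin L) F) (Hv Hu : Matrix (Fin N) (Fin LZ) F) : Prop :=
  ∀ (k : ℕ) (Pv Pu : Matrix (Fin k) (Fin N) F),
    Pv * Hv = Pu * Hu → Pv * Fv = Pu * Fu

/-- Full row rank allows cancelling the matrix on the right. -/
lemma cancel_right_of_rank_rows {F : Type} [Field F] {N LZ k : ℕ}
    {H : Matrix (Fin N) (Fin LZ) F} (hH : H.rank = N)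
    {A B : Matrix (Fin k) (Fin N) F} (h : A * H = B * H) : A = B := by
  have hli : LinearIndependent F (fun i ↦ H i) := by
    rw [linearIndependent_iff_card_eq_finrank_span]
    rw [Matrix.rank_eq_finrank_span_row] at hH
    rw [Set.finrank, Fintype.card_fin]; exact hH.symm
  have hinj : Function.Injective H.vecMul := Matrix.vecMul_injective_iff.mpr hli
  ext i j
  have : (A i) ᵥ* H = (B i) ᵥ* H := by
    have h1 := congrFun (congrFun h i)
    funext l
    simpa [Matrix.mul_apply, Matrix.vecMul, dotProduct] using
      congrFun (congrFun h i) l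
  exact congrFun (hinj this) j

lemma row_eq_vecMul' {F : Type} [Field F] {m N LZ : ℕ}
    (A : Matrix (Fin m) (Fin N) F) (H : Matrix (Fin N) (Fin LZ) F) (i : Fin m) :
    (A * H) i = H.vecMulLinear (A i) := by
  funext l
  simp [Matrix.mul_apply, Matrix.vecMulLinear_apply, Matrix.vecMul, dotProduct]

theorem security_on_full_overlap_suffices (F : Type) [Field F] (L N LZ : ℕ)
    (Fv Fu : Matrix (Fin N) (Fin L) F) (Hv Hu : Matrix (Fin N) (Fin LZ) F)
    (hHv : Hv.rank = N) (hHu : Hu.rank = N)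
    (d : ℕ) (hd : d = Module.finrank F ↥(rowSpan Hv ⊓ rowSpan Hu))
    (Pv Pu : Matrix (Fin d) (Fin N) F)
    (hP : Pv * Hv = Pu * Hu) (hPv : Pv.rank = d) (hPu : Pu.rank = d)
    (hsig : Pv * Fv = Pu * Fu) :
    ∀ (k : ℕ) (Qv Qu : Matrix (Fin k) (Fin N) F),
      Qv * Hv = Qu * Hu → Qv * Fv = Qu * Fu := by
  -- injectivity of vecMul by Hv
  have hli : LinearIndependent F (fun i ↦ Hv i) := by
    rw [linearIndependent_iff_card_eq_finrank_span]
    rw [Matrix.rank_eq_finrank_span_row] at hHv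
    rw [Set.finrank, Fintype.card_fin]; exact hHv.symm
  have hinj : Function.Injective Hv.vecMulLinear := by
    rw [Matrix.coe_vecMulLinear]
    exact Matrix.vecMul_injective_iff.mpr hli
  -- the row span of Pv * Hv equals the overlap space
  have hle : Submodule.span F (Set.range (Pv * Hv)) ≤ rowSpan Hv ⊓ rowSpan Hu := by
    refine Submodule.span_le.mpr ?_
    rintro x ⟨i, rfl⟩
    constructor
    · rw [row_eq_vecMul']
      have : Hv.vecMulLinear (Pv i) ∈ LinearMap.range Hv.vecMulLinear :=
        LinearMap.mem_range_self _ _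
      rwa [range_vecMulLinear] at this
    · rw [hP, row_eq_vecMul']
      have : Hu.vecMulLinear (Pu i) ∈ LinearMap.range Hu.vecMulLinear :=
        LinearMap.mem_range_self _ _
      rwa [range_vecMulLinear] at this
  have hspan_map : Submodule.span F (Set.range (Pv * Hv))
      = Submodule.map Hv.vecMulLinear (Submodule.span F (Set.range Pv)) := by
    rw [Submodule.map_span]
    congr 1
    ext x
    constructor
    · rintro ⟨i, rfl⟩; exact ⟨Pv i, ⟨i, rfl⟩, (row_eq_vecMul' Pv Hv i).symm⟩
    · rintro ⟨y, ⟨i, rfl⟩, rfl⟩; exact ⟨i, row_eq_vecMul' Pv Hv i⟩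
  have hdim : Module.finrank F (Submodule.span F (Set.range (Pv * Hv))) = d := by
    rw [hspan_map]
    rw [← LinearEquiv.finrank_eq (Submodule.equivMapOfInjective Hv.vecMulLinear hinj
      (Submodule.span F (Set.range Pv)))]
    rw [show Set.range Pv = Set.range Pv.row from rfl, ← Matrix.rank_eq_finrank_span_row, hPv]
  have heq : Submodule.span F (Set.range (Pv * Hv)) = rowSpan Hv ⊓ rowSpan Hu := by
    apply Submodule.eq_of_le_of_finrank_eq hle
    rw [hdim, hd]
  -- now the main argument
  intro k Qv Qu hQ
  -- every row of Qv * Hv lies in the span of rows of Pv * Hv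
  have hmem : ∀ i : Fin k, (Qv * Hv) i ∈ Submodule.span F (Set.range (Pv * Hv)) := by
    intro i
    rw [heq]
    constructor
    · rw [row_eq_vecMul']
      have : Hv.vecMulLinear (Qv i) ∈ LinearMap.range Hv.vecMulLinear :=
        LinearMap.mem_range_self _ _
      rwa [range_vecMulLinear] at this
    · rw [hQ, row_eq_vecMul']
      have : Hu.vecMulLinear (Qu i) ∈ LinearMap.range Hu.vecMulLinear :=
        LinearMap.mem_range_self _ _
      rwa [range_vecMulLinear] at this
  -- get coefficient matrix R
  have hR : ∀ i : Fin k, ∃ c : Fin d → F, ∑ j, c j • (Pv * Hv) j = (Qv * Hv) i := by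
    intro i
    exact (Submodule.mem_span_range_iff_exists_fun F).mp (hmem i)
  choose R hRspec using hR
  have hRmat : ∀ (M : Matrix (Fin d) (Fin LZ) F),
      (∀ i, ∑ j, R i j • M j = (Qv * Hv) i) → Qv * Hv = Matrix.of R * M := by
    intro M hM
    ext i l
    rw [← hM i]
    simp [Matrix.mul_apply, Finset.sum_apply]
  have hQvHv : Qv * Hv = Matrix.of R * (Pv * Hv) := hRmat _ hRspec
  -- cancel Hv
  have hQv : Qv = Matrix.of R * Pv := by
    apply cancel_right_of_rank_rows hHv
    rw [hQvHv, Matrix.mul_assoc]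
  -- cancel Hu
  have hQu : Qu = Matrix.of R * Pu := by
    apply cancel_right_of_rank_rows hHu
    rw [← hQ, hQvHv, hP, Matrix.mul_assoc]
  rw [hQv, hQu, Matrix.mul_assoc, Matrix.mul_assoc, hsig]
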